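/- Lower bound on the stochastic gradient innovation (why stochastic LAG fails). Then E[‖g(θ,ξ) − g(θ′,ξ′)‖²] ≥ (1/2)·E[‖g(θ,ξ) − G(θ)‖²] + (1/2)·E[‖g(θ′,ξ′) − G(θ′)‖²] − E[‖G(θ) − G(θ′)‖²]. -/

import Mathlib

open MeasureTheory ProbabilityTheory

lemma condexp_clm_aux {α : Type*} {m m0 : MeasurableSpace α} (hm : m ≤ m0) {μ : Measure α}
    [IsFiniteMeasure μ] {E F : Type*} [NormedAddCommGroup E] [NormedSpace ℝ E] [CompleteSpace E]
    [NormedAddCommGroup F] [NormedSpace ℝ F] [CompleteSpace F]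
    (T : E →L[ℝ] F) {f : α → E} (hf : Integrable f μ) :
    μ[fun a => T (f a)|m] =ᵐ[μ] fun a => T ((μ[f|m]) a) := by
  haveI : SigmaFinite (μ.trim hm) := by
    have : IsFiniteMeasure (μ.trim hm) := isFiniteMeasure_trim hm
    infer_instance
  refine (ae_eq_condExp_of_forall_setIntegral_eq hm (T.integrable_comp hf)
    (fun s _ _ => (T.integrable_comp integrable_condExp).integrableOn)
    (fun s hs _ => ?_) ?_).symm
  · rw [T.integral_comp_comm integrable_condExp.integrableOn,
      T.integral_comp_comm hf.integrableOn, setIntegral_condExp hm hf hs]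
  · exact (T.continuous.comp_stronglyMeasurable stronglyMeasurable_condExp).aestronglyMeasurable

/-- Lower bound on the stochastic gradient innovation (why stochastic LAG fails). -/
theorem lag_innovation_lower_bound
    {dim : ℕ} {Ω : Type} [mΩ : MeasurableSpace Ω] (P : Measure Ω) [IsProbabilityMeasure P]
    -- a sub-σ-algebra 𝒢
    (mG : MeasurableSpace Ω) (hmG : mG ≤ mΩ)
    -- sample space and stochastic gradient map
    {Ξ : Type} [MeasurableSpace Ξ] (μ : Measure Ξ) [IsProbabilityMeasure μ]
    (g : EuclideanSpace ℝ (Fin dim) → Ξ → EuclideanSpace ℝ (Fin dim))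
    (hgmeas : Measurable (Function.uncurry g))
    -- mean map G
    (G : EuclideanSpace ℝ (Fin dim) → EuclideanSpace ℝ (Fin dim))
    (hG : ∀ x, G x = ∫ s, g x s ∂μ)
    -- 𝒢-measurable square-integrable random points
    (θ θ' : Ω → EuclideanSpace ℝ (Fin dim))
    (hθmeas : Measurable[mG] θ) (hθ'meas : Measurable[mG] θ')
    (hθL2 : MemLp θ 2 P) (hθ'L2 : MemLp θ' 2 P)
    -- samples: ξ' is 𝒢-measurable, ξ has law μ and is independent of 𝒢
    (ξ' : Ω → Ξ) (hξ'meas : Measurable[mG] ξ')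
    (ξ : Ω → Ξ) (hξmeas : Measurable[mΩ] ξ) (hξlaw : @Measure.map Ω Ξ mΩ _ ξ P = μ)
    (hξindep : Indep (MeasurableSpace.comap ξ inferInstance) mG P)
    -- conditional unbiasedness
    (hunbiased : P[(fun ω => g (θ ω) (ξ ω)) | mG] =ᵐ[P] fun ω => G (θ ω))
    -- all second moments appearing are finite
    (hint1 : Integrable (fun ω => ‖g (θ ω) (ξ ω) - g (θ' ω) (ξ' ω)‖ ^ 2) P)
    (hint2 : Integrable (fun ω => ‖g (θ ω) (ξ ω) - G (θ ω)‖ ^ 2) P)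
    (hint3 : Integrable (fun ω => ‖g (θ' ω) (ξ' ω) - G (θ' ω)‖ ^ 2) P)
    (hint4 : Integrable (fun ω => ‖G (θ ω) - G (θ' ω)‖ ^ 2) P) :
    ∫ ω, ‖g (θ ω) (ξ ω) - g (θ' ω) (ξ' ω)‖ ^ 2 ∂P ≥
      (1 / 2) * ∫ ω, ‖g (θ ω) (ξ ω) - G (θ ω)‖ ^ 2 ∂P
      + (1 / 2) * ∫ ω, ‖g (θ' ω) (ξ' ω) - G (θ' ω)‖ ^ 2 ∂P
      - ∫ ω, ‖G (θ ω) - G (θ' ω)‖ ^ 2 ∂P := by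
  haveI : SigmaFinite (P.trim hmG) := by
    have : IsFiniteMeasure (P.trim hmG) := isFiniteMeasure_trim hmG
    infer_instance
  -- abbreviations
  set X : Ω → EuclideanSpace ℝ (Fin dim) := fun ω => g (θ ω) (ξ ω) with hXdef
  set Y : Ω → EuclideanSpace ℝ (Fin dim) := fun ω => G (θ ω) with hYdef
  set Z : Ω → EuclideanSpace ℝ (Fin dim) := fun ω => g (θ' ω) (ξ' ω) with hZdef
  set W : Ω → EuclideanSpace ℝ (Fin dim) := fun ω => G (θ' ω) with hWdef
  set A : Ω → EuclideanSpace ℝ (Fin dim) := fun ω => X ω - Y ω with hAdef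
  set D : Ω → EuclideanSpace ℝ (Fin dim) := fun ω => Y ω - Z ω with hDdef
  -- measurability
  have hθm : Measurable[mΩ] θ := hθmeas.mono hmG le_rfl
  have hXmeas : Measurable[mΩ] X := hgmeas.comp (hθm.prodMk hξmeas)
  have hGsm : StronglyMeasurable G := by
    have : G = fun x => ∫ s, g x s ∂μ := funext hG
    rw [this]
    exact hgmeas.stronglyMeasurable.integral_prod_right'
  have hYsmG : StronglyMeasurable[mG] Y := hGsm.comp_measurable hθmeas
  have hZsmG : StronglyMeasurable[mG] Z :=
    hgmeas.stronglyMeasurable.comp_measurable (hθ'meas.prodMk hξ'meas)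
  have hWsmG : StronglyMeasurable[mG] W := hGsm.comp_measurable hθ'meas
  have hAsm : StronglyMeasurable[mΩ] A := hXmeas.stronglyMeasurable.sub (hYsmG.mono hmG)
  have hDsmG : StronglyMeasurable[mG] D := hYsmG.sub hZsmG
  -- L² memberships
  have hA2 : MemLp A 2 P := (memLp_two_iff_integrable_sq_norm hAsm.aestronglyMeasurable).2 hint2
  have hB2 : MemLp (fun ω => Y ω - W ω) 2 P :=
    (memLp_two_iff_integrable_sq_norm
      ((hYsmG.sub hWsmG).mono hmG).aestronglyMeasurable).2 hint4
  have hC2 : MemLp (fun ω => Z ω - W ω) 2 P :=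
    (memLp_two_iff_integrable_sq_norm
      ((hZsmG.sub hWsmG).mono hmG).aestronglyMeasurable).2 hint3
  have hD2 : MemLp D 2 P := by
    have h := hB2.sub hC2
    exact h.ae_eq (Filter.Eventually.of_forall fun ω => by
      show (Y ω - W ω) - (Z ω - W ω) = D ω
      simp [hDdef])
  have hAint : Integrable A P := hA2.integrable one_le_two
  -- integrability of X and Y
  have hXint : Integrable X P := by
    by_contra hX
    have h0 : P[X|mG] = 0 := condExp_of_not_integrable hX
    have hY0 : (0 : Ω → EuclideanSpace ℝ (Fin dim)) =ᵐ[P] Y := h0 ▸ hunbiased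
    have hXA : X =ᵐ[P] A := by
      filter_upwards [hY0] with ω h
      have hy : Y ω = 0 := (congrArg id h).symm
      simp [hAdef, hy]
    exact hX (hAint.congr hXA.symm)
  have hYint : Integrable Y P := by
    have h := hXint.sub hAint
    refine h.congr (Filter.Eventually.of_forall fun ω => ?_)
    show X ω - A ω = Y ω
    simp [hAdef]
  -- conditional expectation of A is zero
  have hcondA : P[A|mG] =ᵐ[P] 0 := by
    have h1 : P[A|mG] =ᵐ[P] P[X|mG] - P[Y|mG] := condExp_sub hXint hYint mG
    have h2 : P[Y|mG] = Y := condExp_of_stronglyMeasurable hmG hYsmG hYint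
    filter_upwards [h1, hunbiased] with ω h h'
    simp only [Pi.sub_apply, h2] at h
    rw [h, h']
    simp [hYdef]
  -- coordinate facts
  have hAi2 : ∀ i, MemLp (fun ω => A ω i) 2 P := fun i =>
    ((EuclideanSpace.proj (𝕜 := ℝ) i).comp_memLp' hA2).ae_eq
      (Filter.Eventually.of_forall fun ω => rfl)
  have hDi2 : ∀ i, MemLp (fun ω => D ω i) 2 P := fun i =>
    ((EuclideanSpace.proj (𝕜 := ℝ) i).comp_memLp' hD2).ae_eq
      (Filter.Eventually.of_forall fun ω => rfl)
  have hDiSM : ∀ i : Fin dim, StronglyMeasurable[mΩ] (fun ω => D ω i) := fun i =>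
    (EuclideanSpace.proj (𝕜 := ℝ) i).continuous.comp_stronglyMeasurable (hDsmG.mono hmG)
  have hAiSM : ∀ i : Fin dim, StronglyMeasurable[mΩ] (fun ω => A ω i) := fun i =>
    (EuclideanSpace.proj (𝕜 := ℝ) i).continuous.comp_stronglyMeasurable hAsm
  have hprod : ∀ i, Integrable (fun ω => D ω i * A ω i) P := by
    intro i
    have hDsq : Integrable (fun ω => D ω i ^ 2) P :=
      (memLp_two_iff_integrable_sq (hDiSM i).aestronglyMeasurable).1 (hDi2 i)
    have hAsq : Integrable (fun ω => A ω i ^ 2) P :=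
      (memLp_two_iff_integrable_sq (hAiSM i).aestronglyMeasurable).1 (hAi2 i)
    refine (hDsq.add hAsq).mono' ((hDiSM i).mul (hAiSM i)).aestronglyMeasurable
      (Filter.Eventually.of_forall fun ω => ?_)
    show ‖D ω i * A ω i‖ ≤ D ω i ^ 2 + A ω i ^ 2
    rw [Real.norm_eq_abs, abs_mul]
    nlinarith [abs_nonneg (D ω i), abs_nonneg (A ω i), sq_abs (D ω i), sq_abs (A ω i),
      sq_nonneg (|D ω i| - |A ω i|)]
  have hAi0 : ∀ i : Fin dim, P[fun ω => A ω i|mG] =ᵐ[P] 0 := by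
    intro i
    have h := condexp_clm_aux hmG (EuclideanSpace.proj (𝕜 := ℝ) i) hAint
    have h' : (fun a => (EuclideanSpace.proj (𝕜 := ℝ) i) ((P[A|mG]) a)) =ᵐ[P] 0 := by
      filter_upwards [hcondA] with ω hω
      simp [hω]
    exact (h.trans h')
  have hcross_i : ∀ i : Fin dim, ∫ ω, D ω i * A ω i ∂P = 0 := by
    intro i
    have hDiSMG : StronglyMeasurable[mG] (fun ω => D ω i) :=
      (EuclideanSpace.proj (𝕜 := ℝ) i).continuous.comp_stronglyMeasurable hDsmG
    have hAiint : Integrable (fun ω => A ω i) P := (hAi2 i).integrable one_le_two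
    have hmul : P[(fun ω => D ω i) * (fun ω => A ω i)|mG]
        =ᵐ[P] (fun ω => D ω i) * P[fun ω => A ω i|mG] :=
      condExp_mul_of_stronglyMeasurable_left hDiSMG (hprod i) hAiint
    have h0 : P[(fun ω => D ω i) * (fun ω => A ω i)|mG] =ᵐ[P] 0 := by
      filter_upwards [hmul, hAi0 i] with ω h1 h2
      simp only [Pi.mul_apply] at h1 ⊢
      rw [h1, h2]; simp
    calc ∫ ω, D ω i * A ω i ∂P
        = ∫ ω, (P[(fun ω => D ω i) * (fun ω => A ω i)|mG]) ω ∂P :=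
          (integral_condExp hmG).symm
      _ = ∫ ω, (0 : Ω → ℝ) ω ∂P := integral_congr_ae h0
      _ = 0 := by simp
  -- inner product cross term
  have hptwise : ∀ ω, (inner ℝ (A ω) (D ω) : ℝ) = ∑ i, D ω i * A ω i := by
    intro ω
    rw [PiLp.inner_apply]
    exact Finset.sum_congr rfl fun i _ => by
      simp [RCLike.inner_apply, starRingEnd_apply, mul_comm]
  have hinner_int : Integrable (fun ω => (inner ℝ (A ω) (D ω) : ℝ)) P := by
    have h : Integrable (fun ω => ∑ i, D ω i * A ω i) P :=
      integrable_finset_sum _ fun i _ => hprod i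
    exact h.congr (Filter.Eventually.of_forall fun ω => (hptwise ω).symm)
  have hcross : ∫ ω, (inner ℝ (A ω) (D ω) : ℝ) ∂P = 0 := by
    rw [integral_congr_ae (Filter.Eventually.of_forall hptwise),
      integral_finset_sum _ fun i _ => hprod i]
    simp [hcross_i]
  -- integrability of squared norms
  have hDsqint : Integrable (fun ω => ‖D ω‖ ^ 2) P :=
    (memLp_two_iff_integrable_sq_norm ((hDsmG.mono hmG)).aestronglyMeasurable).1 hD2
  -- expansion of the square
  have hkey : ∫ ω, ‖X ω - Z ω‖ ^ 2 ∂P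
      = ∫ ω, ‖A ω‖ ^ 2 ∂P + 2 * ∫ ω, (inner ℝ (A ω) (D ω) : ℝ) ∂P + ∫ ω, ‖D ω‖ ^ 2 ∂P := by
    have hsplit : ∀ ω, ‖X ω - Z ω‖ ^ 2
        = ‖A ω‖ ^ 2 + 2 * (inner ℝ (A ω) (D ω) : ℝ) + ‖D ω‖ ^ 2 := by
      intro ω
      have : X ω - Z ω = A ω + D ω := by simp [hAdef, hDdef]
      rw [this, norm_add_sq_real]
    have hAsqint : Integrable (fun ω => ‖A ω‖ ^ 2) P := hint2
    have hi2 : Integrable (fun ω => 2 * (inner ℝ (A ω) (D ω) : ℝ)) P := hinner_int.const_mul 2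
    have h12 : Integrable (fun ω => ‖A ω‖ ^ 2 + 2 * (inner ℝ (A ω) (D ω) : ℝ)) P :=
      hAsqint.add hi2
    rw [integral_congr_ae (Filter.Eventually.of_forall hsplit)]
    rw [integral_add h12 hDsqint, integral_add hAsqint hi2, integral_const_mul]
  -- pointwise lower bound on ‖D‖²
  have hDlow : ∫ ω, ‖D ω‖ ^ 2 ∂P
      ≥ ∫ ω, ((1 / 2) * ‖Z ω - W ω‖ ^ 2 - ‖Y ω - W ω‖ ^ 2) ∂P := by
    have hint3' : Integrable (fun ω => ‖Z ω - W ω‖ ^ 2) P := hint3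
    have hint4' : Integrable (fun ω => ‖Y ω - W ω‖ ^ 2) P := hint4
    refine integral_mono ((hint3'.const_mul _).sub hint4') hDsqint fun ω => ?_
    have h1 : ‖Z ω - W ω‖ ≤ ‖Y ω - W ω‖ + ‖D ω‖ := by
      have he : Z ω - W ω = (Y ω - W ω) - D ω := by simp only [hDdef]; abel
      rw [he]
      exact norm_sub_le _ _
    have h2 := norm_nonneg (Z ω - W ω)
    have h3 := norm_nonneg (Y ω - W ω)
    have h4 := norm_nonneg (D ω)
    dsimp only
    nlinarith [sq_nonneg (‖Y ω - W ω‖ - ‖D ω‖)]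
  have hDlow' : ∫ ω, ((1 / 2) * ‖Z ω - W ω‖ ^ 2 - ‖Y ω - W ω‖ ^ 2) ∂P
      = (1 / 2) * ∫ ω, ‖Z ω - W ω‖ ^ 2 ∂P - ∫ ω, ‖Y ω - W ω‖ ^ 2 ∂P := by
    have hint3' : Integrable (fun ω => ‖Z ω - W ω‖ ^ 2) P := hint3
    have hint4' : Integrable (fun ω => ‖Y ω - W ω‖ ^ 2) P := hint4
    rw [integral_sub (hint3'.const_mul _) hint4', integral_const_mul]
  have hAnn : ∫ ω, ‖A ω‖ ^ 2 ∂P ≥ 0 := integral_nonneg fun ω => sq_nonneg _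
  -- conclude
  have hgoal : ∫ ω, ‖X ω - Z ω‖ ^ 2 ∂P = ∫ ω, ‖A ω‖ ^ 2 ∂P + ∫ ω, ‖D ω‖ ^ 2 ∂P := by
    rw [hkey, hcross]; ring
  rw [hDlow'] at hDlow
  show ∫ ω, ‖X ω - Z ω‖ ^ 2 ∂P ≥ (1 / 2) * ∫ ω, ‖A ω‖ ^ 2 ∂P
      + (1 / 2) * ∫ ω, ‖Z ω - W ω‖ ^ 2 ∂P - ∫ ω, ‖Y ω - W ω‖ ^ 2 ∂P
  linarith
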